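/- Define polynomials $g_l(t) \in \mathbb{Z}[t, t^{-1}]$ (representing $(-t)^{(l-1)/2}\Delta_l(-t)$) by the property $g_l = f_{l-1} = \sum_{i=0}^{l-1} t^i$. For an integer $n \geq 1$ and odd integers $3 \leq p \leq q$, let $D(t) = -f_{2n-2} f_{p-1} f_{q-1} + f_{2n-1} f_{p-2} f_{q-1} + f_{2n-1} f_{p-1} f_{q-2}$. Then $D(t)$ has a coefficient whose absolute value is at least $3$. -/

import Mathlib

open Polynomial

noncomputable def f (l : ℕ) : Polynomial ℤ := ∑ i ∈ Finset.range (l + 1), X ^ i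

lemma f_coeff (l k : ℕ) : (f l).coeff k = if k ≤ l then 1 else 0 := by
  simp [f, Polynomial.finset_sum_coeff, Polynomial.coeff_X_pow, Nat.lt_succ_iff]

lemma coeff_one_mul (p q : Polynomial ℤ) :
    (p * q).coeff 1 = p.coeff 0 * q.coeff 1 + p.coeff 1 * q.coeff 0 := by
  rw [Polynomial.coeff_mul, Finset.Nat.sum_antidiagonal_eq_sum_range_succ_mk]
  simp [Finset.sum_range_succ]

theorem stmt9 (n p q : ℕ) (hn : 1 ≤ n) (hp : Odd p) (hq : Odd q)
    (hp3 : 3 ≤ p) (hpq : p ≤ q) :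
    ∃ k : ℕ, 3 ≤ |(-(f (2 * n - 2)) * f (p - 1) * f (q - 1)
      + f (2 * n - 1) * f (p - 2) * f (q - 1)
      + f (2 * n - 1) * f (p - 1) * f (q - 2)).coeff k| := by
  refine ⟨1, ?_⟩
  have hq3 : 3 ≤ q := le_trans hp3 hpq
  have h1 : (1:ℕ) ≤ p - 1 := by omega
  have h2 : (1:ℕ) ≤ p - 2 := by omega
  have h3 : (1:ℕ) ≤ q - 1 := by omega
  have h4 : (1:ℕ) ≤ q - 2 := by omega
  have h5 : (1:ℕ) ≤ 2 * n - 1 := by omega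
  simp only [Polynomial.coeff_add, coeff_one_mul,
    Polynomial.mul_coeff_zero, Polynomial.coeff_neg, f_coeff,
    if_pos (Nat.zero_le _), if_pos h1, if_pos h2, if_pos h3, if_pos h4, if_pos h5]
  by_cases h : (1:ℕ) ≤ 2 * n - 2 <;> simp [h] <;> norm_num
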